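/- Let N = 2^M for a positive integer M. The modulo-DFT sensing model is identifiable on ℂ^N_𝒱 if and only if 0 ∈ 𝒱, 2^{M−1} ∈ 𝒱, and for every m ∈ {0,1,…,M−2}, the set 𝒱 contains at least one element of {i·2^{M−m} + 2^{M−m−2} : 0 ≤ i ≤ 2^m − 1} and at least one element of {i·2^{M−m} + 3·2^{M−m−2} : 0 ≤ i ≤ 2^m − 1}. -/

import Mathlib

open Polynomial

set_option maxHeartbeats 1000000

noncomputable def dft (N : ℕ) : Matrix (Fin N) (Fin N) ℂ :=
  Matrix.of fun n₁ n₂ : Fin N => (1 / Real.sqrt N : ℂ) *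
    Complex.exp (-(2 * Real.pi * Complex.I * (n₁ : ℕ) * (n₂ : ℕ)) / N)

/-- A complex number is a Gaussian integer if its real and imaginary parts are integers. -/
def IsGaussianInt (z : ℂ) : Prop := ∃ a b : ℤ, z = (a : ℂ) + (b : ℂ) * Complex.I

/-- Identifiability of the modulo-DFT sensing model on `ℂ^N_𝒱`: any two signals
supported off `𝒱` whose DFT images differ by a Gaussian integer vector coincide. -/
def ModuloDFTIdentifiable (N : ℕ) (V : Set ℕ) : Prop :=
  ∀ s s' : Fin N → ℂ,
    (∀ n : Fin N, (n : ℕ) ∈ V → s n = 0) →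
    (∀ n : Fin N, (n : ℕ) ∈ V → s' n = 0) →
    (∀ m : Fin N, IsGaussianInt ((dft N).mulVec s m - (dft N).mulVec s' m)) →
    s = s'

open IntermediateField

noncomputable def zet (N : ℕ) : ℂ := Complex.exp (2 * Real.pi * Complex.I / N)

lemma zet_prim {N : ℕ} (hN : N ≠ 0) : IsPrimitiveRoot (zet N) N :=
  Complex.isPrimitiveRoot_exp N hN

lemma dft_apply (N : ℕ) (n₁ n₂ : Fin N) :
    dft N n₁ n₂ = (1 / Real.sqrt N : ℂ) * ((zet N) ^ ((n₁ : ℕ) * (n₂ : ℕ)))⁻¹ := by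
  have : (-(2 * Real.pi * Complex.I * (n₁ : ℕ) * (n₂ : ℕ)) / N) =
      -((((n₁ : ℕ) * (n₂ : ℕ) : ℕ) : ℂ) * (2 * Real.pi * Complex.I / N)) := by
    push_cast; ring
  rw [dft, Matrix.of_apply, this, Complex.exp_neg, Complex.exp_nat_mul, zet]

lemma zet_ne_zero {N : ℕ} (hN : N ≠ 0) : zet N ≠ 0 := by
  intro h
  have := (zet_prim hN).pow_eq_one
  rw [h] at this
  simp [hN] at this

lemma orth {N : ℕ} (hN : N ≠ 0) (a b : Fin N) :
    ∑ n : Fin N, ((zet N) ^ ((a : ℕ) * (n : ℕ)))⁻¹ * (zet N) ^ ((b : ℕ) * (n : ℕ))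
      = if a = b then (N : ℂ) else 0 := by
  set ζ := zet N
  set μ : ℂ := (ζ ^ (a : ℕ))⁻¹ * ζ ^ (b : ℕ) with hμ
  have hterm : ∀ n : Fin N, (ζ ^ ((a : ℕ) * (n : ℕ)))⁻¹ * ζ ^ ((b : ℕ) * (n : ℕ)) = μ ^ (n : ℕ) := by
    intro n
    rw [hμ, mul_pow, pow_mul, pow_mul, inv_pow]
  rw [Finset.sum_congr rfl (fun n _ => hterm n)]
  by_cases h : a = b
  · subst h
    have : μ = 1 := by
      rw [hμ]; exact inv_mul_cancel₀ (pow_ne_zero _ (zet_ne_zero hN))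
    simp [this]
  · have hμ1 : μ ≠ 1 := by
      intro hc
      apply h
      have : ζ ^ (a : ℕ) = ζ ^ (b : ℕ) := by
        have := congrArg (fun z => ζ ^ (a : ℕ) * z) hc
        simpa [hμ, mul_inv_cancel_left₀, ← mul_assoc,
          mul_inv_cancel₀ (pow_ne_zero (a:ℕ) (zet_ne_zero hN) : ζ ^ (a:ℕ) ≠ 0)] using this.symm
      exact Fin.ext ((zet_prim hN).pow_inj a.isLt b.isLt this)
    have hμN : μ ^ N = 1 := by
      rw [hμ, mul_pow, inv_pow, ← pow_mul, ← pow_mul, mul_comm (a:ℕ), mul_comm (b:ℕ),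
        pow_mul, pow_mul, (zet_prim hN).pow_eq_one, one_pow, one_pow]
      simp
    rw [Fin.sum_univ_eq_sum_range, geom_sum_eq hμ1, hμN]
    simp [h]

noncomputable def synth (N : ℕ) (y : Fin N → ℂ) : Fin N → ℂ :=
  fun n => (1 / Real.sqrt N : ℂ) * ∑ m : Fin N, y m * (zet N) ^ ((n : ℕ) * (m : ℕ))

lemma sqrt_fact {N : ℕ} (hN : N ≠ 0) :
    (1 / Real.sqrt N : ℂ) * (1 / Real.sqrt N : ℂ) * N = 1 := by
  have h0 : (0:ℝ) ≤ N := Nat.cast_nonneg N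
  have : (Real.sqrt N : ℂ) * (Real.sqrt N : ℂ) = (N : ℂ) := by
    rw [← Complex.ofReal_mul, Real.mul_self_sqrt h0]
    simp
  field_simp
  rw [sq, this]
  exact div_self (Nat.cast_ne_zero.mpr hN)

lemma synth_mulVec {N : ℕ} (hN : N ≠ 0) (y : Fin N → ℂ) :
    (dft N).mulVec (synth N y) = y := by
  funext k
  rw [Matrix.mulVec]
  show ∑ n : Fin N, dft N k n * synth N y n = y k
  have step : ∀ n : Fin N, dft N k n * synth N y n
      = (1 / Real.sqrt N : ℂ) * (1 / Real.sqrt N : ℂ) *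
        ∑ m : Fin N, y m * (((zet N) ^ ((k : ℕ) * (n : ℕ)))⁻¹ * (zet N) ^ ((m : ℕ) * (n : ℕ))) := by
    intro n
    rw [dft_apply, synth]
    simp only [Finset.mul_sum]
    apply Finset.sum_congr rfl
    intro m _
    rw [mul_comm (m:ℕ) (n:ℕ)]
    ring
  rw [Finset.sum_congr rfl (fun n _ => step n), ← Finset.mul_sum, Finset.sum_comm]
  have inner : ∀ m : Fin N,
      (∑ n : Fin N, y m * (((zet N) ^ ((k : ℕ) * (n : ℕ)))⁻¹ * (zet N) ^ ((m : ℕ) * (n : ℕ))))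
        = (if k = m then y m * (N:ℂ) else 0) := by
    intro m
    rw [← Finset.mul_sum, orth hN k m, mul_ite, mul_zero]
  rw [Finset.sum_congr rfl (fun m _ => inner m)]
  rw [Finset.sum_ite_eq (Finset.univ) k (fun m => y m * (N:ℂ))]
  simp only [Finset.mem_univ, if_true]
  rw [mul_comm (y k) (N:ℂ), ← mul_assoc, sqrt_fact hN, one_mul]

lemma mulVec_synth {N : ℕ} (hN : N ≠ 0) (x : Fin N → ℂ) :
    synth N ((dft N).mulVec x) = x := by
  funext n
  show (1 / Real.sqrt N : ℂ) * ∑ m : Fin N, (∑ j : Fin N, dft N m j * x j) * (zet N) ^ ((n : ℕ) * (m : ℕ)) = x n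
  have step : ∀ m : Fin N, (∑ j : Fin N, dft N m j * x j) * (zet N) ^ ((n : ℕ) * (m : ℕ))
      = (1 / Real.sqrt N : ℂ) *
        ∑ j : Fin N, x j * (((zet N) ^ ((j : ℕ) * (m : ℕ)))⁻¹ * (zet N) ^ ((n : ℕ) * (m : ℕ))) := by
    intro m
    rw [Finset.sum_mul, Finset.mul_sum]
    congr 1
    funext j
    rw [dft_apply, mul_comm (m:ℕ) (j:ℕ)]
    ring
  rw [Finset.sum_congr rfl (fun m _ => step m), ← Finset.mul_sum, Finset.sum_comm]
  have inner : ∀ j : Fin N,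
      (∑ m : Fin N, x j * (((zet N) ^ ((j : ℕ) * (m : ℕ)))⁻¹ * (zet N) ^ ((n : ℕ) * (m : ℕ))))
        = (if j = n then x j * (N:ℂ) else 0) := by
    intro j
    rw [← Finset.mul_sum, orth hN j n, mul_ite, mul_zero]
  rw [Finset.sum_congr rfl (fun j _ => inner j)]
  rw [Finset.sum_ite_eq' (Finset.univ) n (fun j => x j * (N:ℂ))]
  simp only [Finset.mem_univ, if_true]
  rw [mul_comm (x n) (N:ℂ), ← mul_assoc, ← mul_assoc, sqrt_fact hN, one_mul]

lemma fin1 {k : ℕ} (ζ : ℂ) (hζ : IsPrimitiveRoot ζ (2 ^ (k + 1))) :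
    Module.finrank ℚ ℚ⟮ζ⟯ = 2 ^ k := by
  have hpos : 0 < 2 ^ (k + 1) := Nat.pow_pos (by norm_num)
  have hint : IsIntegral ℚ ζ := (hζ.isIntegral hpos).tower_top
  rw [IntermediateField.adjoin.finrank hint,
    ← Polynomial.cyclotomic_eq_minpoly_rat hζ hpos, Polynomial.natDegree_cyclotomic,
    Nat.totient_prime_pow Nat.prime_two (Nat.succ_pos k)]
  simp

lemma I_prim : IsPrimitiveRoot Complex.I 4 := by
  have := Complex.isPrimitiveRoot_exp 4 (by norm_num)
  convert this using 1
  rw [show ((4:ℕ):ℂ) = 4 by norm_num, show (2 * Real.pi * Complex.I / 4 : ℂ)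
    = (Real.pi/2) * Complex.I by push_cast; ring]
  rw [Complex.exp_mul_I]
  simp [Real.cos_pi_div_two, Real.sin_pi_div_two]

noncomputable def KK : IntermediateField ℚ ℂ := ℚ⟮Complex.I⟯

lemma finrank_KK : Module.finrank ℚ KK = 2 := by
  delta KK
  have := fin1 Complex.I (k := 1) (by norm_num; exact I_prim)
  simpa using this

lemma pow_eq_neg_one {m : ℕ} {ζ : ℂ} (h : IsPrimitiveRoot ζ (2 ^ (m + 2))) :
    ζ ^ (2 ^ (m + 1)) = -1 := by
  have h2 : (ζ ^ (2 ^ (m + 1))) ^ 2 = 1 := by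
    rw [← pow_mul, ← pow_succ, h.pow_eq_one]
  have hne : ζ ^ (2 ^ (m + 1)) ≠ 1 :=
    h.pow_ne_one_of_pos_of_lt (Nat.pow_pos two_pos).ne'
      (Nat.pow_lt_pow_right one_lt_two (Nat.lt_succ_self _))
  have : (ζ ^ (2 ^ (m + 1)) - 1) * (ζ ^ (2 ^ (m + 1)) + 1) = 0 := by ring_nf; linear_combination h2
  rcases mul_eq_zero.mp this with hc | hc
  · exact absurd (by linear_combination hc) hne
  · linear_combination hc

lemma conj_root {m : ℕ} {ζ₁ ζ₂ : ℂ} (h1 : IsPrimitiveRoot ζ₁ (2 ^ (m + 2)))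
    (h2 : IsPrimitiveRoot ζ₂ (2 ^ (m + 2))) (heq : ζ₁ ^ (2 ^ m) = ζ₂ ^ (2 ^ m))
    (P : Polynomial ↥KK) (hP : Polynomial.aeval ζ₁ P = 0) : Polynomial.aeval ζ₂ P = 0 := by
  classical
  set cv : ℂ := ζ₁ ^ (2 ^ m) with hcv
  have hsq : cv ^ 2 = -1 := by
    rw [hcv, ← pow_mul, ← pow_succ]; exact pow_eq_neg_one h1
  have hIor : cv = Complex.I ∨ cv = -Complex.I := by
    have : (cv - Complex.I) * (cv + Complex.I) = 0 := by
      have hI : Complex.I ^ 2 = -1 := Complex.I_sq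
      linear_combination hsq - hI
    rcases mul_eq_zero.mp this with hc | hc
    · left; linear_combination hc
    · right; linear_combination hc
  have hcmem : cv ∈ KK := by
    rcases hIor with hc | hc
    · rw [hc, KK]; exact mem_adjoin_simple_self ℚ Complex.I
    · rw [hc, KK]; exact neg_mem (mem_adjoin_simple_self ℚ Complex.I)
  set c : ↥KK := ⟨cv, hcmem⟩ with hc
  -- ζ₁ generates a field containing I
  have hImem : Complex.I ∈ ℚ⟮ζ₁⟯ := by
    have hzmem : cv ∈ ℚ⟮ζ₁⟯ := pow_mem (mem_adjoin_simple_self ℚ ζ₁) _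
    rcases hIor with hcI | hcI
    · rwa [← hcI]
    · have : Complex.I = -cv := by rw [hcI]; ring
      rw [this]; exact neg_mem hzmem
  -- finrank computations
  have hfinE : Module.finrank ℚ ℚ⟮ζ₁⟯ = 2 ^ (m + 1) := fin1 ζ₁ h1
  have hres : (IntermediateField.adjoin ↥KK {ζ₁}).restrictScalars ℚ = ℚ⟮ζ₁⟯ := by
    delta KK
    refine (IntermediateField.adjoin_adjoin_left (F := ℚ) (S := {Complex.I}) {ζ₁}).trans ?_
    apply le_antisymm
    · rw [IntermediateField.adjoin_le_iff]
      rintro z (hz | hz)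
      · simp only [Set.mem_singleton_iff] at hz; subst hz; exact hImem
      · simp only [Set.mem_singleton_iff] at hz; subst hz
        exact mem_adjoin_simple_self ℚ _
    · exact IntermediateField.adjoin.mono ℚ _ _ (Set.subset_union_right)
  have hfinL : Module.finrank ↥KK ↥(IntermediateField.adjoin ↥KK {ζ₁}) = 2 ^ m := by
    haveI : Module.Free ↥KK ↥(IntermediateField.adjoin ↥KK {ζ₁}) := Module.Free.of_divisionRing _ _
    have htower := Module.finrank_mul_finrank ℚ ↥KK ↥(IntermediateField.adjoin ↥KK {ζ₁})
    have : Module.finrank ℚ ↥(IntermediateField.adjoin ↥KK {ζ₁}) = 2 ^ (m + 1) := by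
      have : Module.finrank ℚ ↥((IntermediateField.adjoin ↥KK {ζ₁}).restrictScalars ℚ)
          = Module.finrank ℚ ↥(IntermediateField.adjoin ↥KK {ζ₁}) := rfl
      rw [← this, hres, hfinE]
    rw [finrank_KK, this, pow_succ, mul_comm] at htower
    exact Nat.eq_of_mul_eq_mul_left two_pos (by linarith)
  have hpos : 0 < 2 ^ (m + 2) := Nat.pow_pos two_pos
  have hint : IsIntegral ↥KK ζ₁ := (h1.isIntegral hpos).tower_top
  have hdeg : (minpoly ↥KK ζ₁).natDegree = 2 ^ m := by
    rw [← IntermediateField.adjoin.finrank hint]; exact hfinL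
  -- the candidate polynomial
  set g : Polynomial ↥KK := X ^ (2 ^ m) - C c with hg
  have hgev : Polynomial.aeval ζ₁ g = 0 := by
    rw [hg]
    simp only [map_sub, map_pow, Polynomial.aeval_X, Polynomial.aeval_C]
    have : (algebraMap ↥KK ℂ) c = cv := rfl
    rw [this, hcv, sub_self]
  have hdvd : minpoly ↥KK ζ₁ ∣ g := minpoly.dvd _ _ hgev
  have hgmonic : g.Monic := monic_X_pow_sub_C c (Nat.pow_pos two_pos).ne'
  have hgdeg : g.natDegree = 2 ^ m := natDegree_X_pow_sub_C
  have hmmonic : (minpoly ↥KK ζ₁).Monic := minpoly.monic hint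
  have hgeq : g = minpoly ↥KK ζ₁ := by
    obtain ⟨u, hu⟩ := hdvd
    have hune : u ≠ 0 := by
      intro h0; rw [h0, mul_zero] at hu; exact hgmonic.ne_zero hu
    have hdu : u.natDegree = 0 := by
      have := Polynomial.natDegree_mul hmmonic.ne_zero hune
      rw [← hu, hgdeg, hdeg] at this
      omega
    have hulead : u.leadingCoeff = 1 := by
      have := hgmonic
      rw [Polynomial.Monic, hu, Polynomial.leadingCoeff_mul, hmmonic.leadingCoeff, one_mul] at this
      exact this
    have : u = 1 := by
      rw [Polynomial.eq_C_of_natDegree_eq_zero hdu]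
      rw [Polynomial.leadingCoeff, hdu] at hulead
      rw [hulead, map_one]
    rw [hu, this, mul_one]
  -- conclude
  obtain ⟨R, hR⟩ := minpoly.dvd _ _ hP
  rw [hR, map_mul, ← hgeq]
  have : Polynomial.aeval ζ₂ g = 0 := by
    rw [hg]
    simp only [map_sub, map_pow, Polynomial.aeval_X, Polynomial.aeval_C]
    have : (algebraMap ↥KK ℂ) c = cv := rfl
    rw [this]
    exact sub_eq_zero_of_eq heq.symm
  rw [this, zero_mul]


lemma classify (M : ℕ) (hM : 1 ≤ M) : ∀ n : ℕ, n < 2 ^ M → n ≠ 0 → n ≠ 2 ^ (M - 1) →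
    ∃ m j : ℕ, m + 2 ≤ M ∧ j % 2 = 1 ∧ j < 2 ^ (m + 2) ∧ n = j * 2 ^ (M - m - 2) := by
  induction M, hM using Nat.le_induction with
  | base =>
    intro n hn h0 hh
    simp only [pow_one, pow_zero] at hn hh
    omega
  | succ M hM ih =>
    intro n hn h0 hh
    rcases Nat.even_or_odd n with he | ho
    · obtain ⟨k, hk⟩ := he
      have hk2 : n = 2 * k := by omega
      have hpow : 2 ^ (M + 1) = 2 * 2 ^ M := by rw [pow_succ]; ring
      have hpow2 : (2:ℕ) ^ M = 2 * 2 ^ (M - 1) := by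
        conv_lhs => rw [show M = (M - 1) + 1 by omega]
        rw [pow_succ]; ring
      have hklt : k < 2 ^ M := by omega
      have hk0 : k ≠ 0 := by omega
      have hkh : k ≠ 2 ^ (M - 1) := by
        intro hc; apply hh; rw [show M + 1 - 1 = M by omega, hpow2, hk2, hc]
      obtain ⟨m, j, h1, h2, h3, h4⟩ := ih k hklt hk0 hkh
      refine ⟨m, j, by omega, h2, h3, ?_⟩
      rw [hk2, h4, show M + 1 - m - 2 = (M - m - 2) + 1 by omega, pow_succ]
      ring
    · refine ⟨M - 1, n, by omega, Nat.odd_iff.mp ho, ?_, ?_⟩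
      · rw [show M - 1 + 2 = M + 1 by omega]; exact hn
      · rw [show M + 1 - (M - 1) - 2 = 0 by omega, pow_zero, mul_one]

lemma declass (M m₀ c₀ n : ℕ) (hm : m₀ + 2 ≤ M) (hc : c₀ = 1 ∨ c₀ = 3) (hn : n < 2 ^ M)
    (hcong : n * 2 ^ m₀ ≡ c₀ * 2 ^ (M - 2) [MOD 2 ^ M]) :
    ∃ i : ℕ, i ≤ 2 ^ m₀ - 1 ∧ n = i * 2 ^ (M - m₀) + c₀ * 2 ^ (M - m₀ - 2) := by
  set A := 2 ^ (M - m₀) with hA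
  set r := c₀ * 2 ^ (M - m₀ - 2) with hr
  have e1 : 2 ^ M = A * 2 ^ m₀ := by rw [hA, ← pow_add]; congr 1; omega
  have e2 : c₀ * 2 ^ (M - 2) = r * 2 ^ m₀ := by
    rw [hr, mul_assoc, ← pow_add]; congr 2; omega
  have e3 : A = 4 * 2 ^ (M - m₀ - 2) := by
    rw [hA]
    conv_lhs => rw [show M - m₀ = (M - m₀ - 2) + 2 by omega]
    rw [pow_add]; ring
  have hrA : r < A := by
    rw [hr, e3]
    have : (0:ℕ) < 2 ^ (M - m₀ - 2) := Nat.pow_pos two_pos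
    rcases hc with h | h <;> subst h <;> omega
  have hcong2 : n ≡ r [MOD A] := by
    apply Nat.ModEq.mul_right_cancel' (c := 2 ^ m₀) (Nat.pow_pos two_pos).ne'
    rw [← e1, ← e2]; exact hcong
  have hmod : n % A = r := by
    have := hcong2.symm
    unfold Nat.ModEq at this
    rw [Nat.mod_eq_of_lt hrA] at this
    omega
  refine ⟨n / A, ?_, ?_⟩
  · have : n / A < 2 ^ m₀ := by
      apply Nat.div_lt_of_lt_mul
      rw [← e1]; exact hn
    omega
  · have := Nat.div_add_mod' n A
    rw [hmod] at this
    omega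

lemma zet_pow_eq_iff' {N : ℕ} (hN : N ≠ 0) {a b : ℕ} (hab : a ≤ b) :
    (zet N) ^ a = (zet N) ^ b ↔ a ≡ b [MOD N] := by
  have hzne : (zet N) ^ a ≠ 0 := pow_ne_zero _ (fun h => by
    have := (zet_prim hN).pow_eq_one
    rw [h, zero_pow hN] at this
    exact zero_ne_one this)
  have hsplit : (zet N) ^ b = (zet N) ^ a * (zet N) ^ (b - a) := by
    rw [← pow_add]; congr 1; omega
  rw [Nat.modEq_iff_dvd' hab, ← (zet_prim hN).pow_eq_one_iff_dvd]
  constructor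
  · intro h
    rw [hsplit] at h
    have := mul_left_cancel₀ hzne (by rw [← h, mul_one] :
      (zet N) ^ a * 1 = (zet N) ^ a * (zet N) ^ (b - a))
    exact this.symm
  · intro h
    rw [hsplit, h, mul_one]

lemma zet_pow_eq_iff {N : ℕ} (hN : N ≠ 0) {a b : ℕ} :
    (zet N) ^ a = (zet N) ^ b ↔ a ≡ b [MOD N] := by
  rcases le_total a b with hab | hab
  · exact zet_pow_eq_iff' hN hab
  · rw [eq_comm, zet_pow_eq_iff' hN hab, Nat.ModEq.comm]

lemma odd_coprime_two_pow {j k : ℕ} (hj : j % 2 = 1) : Nat.Coprime j (2 ^ k) := by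
  apply Nat.Coprime.pow_right
  rw [Nat.coprime_comm]
  rw [Nat.Prime.coprime_iff_not_dvd Nat.prime_two]
  omega

lemma prim_pow {M m j : ℕ} (hm : m + 2 ≤ M) (hj : j % 2 = 1) :
    IsPrimitiveRoot ((zet (2 ^ M)) ^ (j * 2 ^ (M - m - 2))) (2 ^ (m + 2)) := by
  have h1 : IsPrimitiveRoot ((zet (2 ^ M)) ^ (2 ^ (M - m - 2))) (2 ^ (m + 2)) := by
    apply IsPrimitiveRoot.pow (Nat.pow_pos two_pos)
      (zet_prim (Nat.pow_pos two_pos).ne')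
    rw [← pow_add]; congr 1; omega
  have := h1.pow_of_coprime j (odd_coprime_two_pow hj)
  rwa [← pow_mul, mul_comm (2 ^ (M - m - 2)) j] at this

lemma zet_quarter {M : ℕ} (hM : 2 ≤ M) : (zet (2 ^ M)) ^ (2 ^ (M - 2)) = Complex.I := by
  rw [zet, ← Complex.exp_nat_mul]
  have hne : ((2:ℂ) ^ (M - 2)) ≠ 0 := pow_ne_zero _ two_ne_zero
  have hcast : ((2 ^ M : ℕ) : ℂ) = (2 ^ (M - 2) : ℂ) * 4 := by
    have hn : (2:ℕ) ^ M = 2 ^ (M - 2) * 4 := by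
      conv_lhs => rw [show M = (M - 2) + 2 by omega]
      rw [pow_add]; norm_num
    rw [hn]; push_cast; ring
  have : ((2 ^ (M - 2) : ℕ) : ℂ) * (2 * (Real.pi : ℂ) * Complex.I / ((2 ^ M : ℕ) : ℂ))
      = (Real.pi / 2 : ℝ) * Complex.I := by
    rw [hcast]
    push_cast
    field_simp
    ring
  rw [this, Complex.exp_mul_I]
  norm_cast
  rw [Real.cos_pi_div_two, Real.sin_pi_div_two]
  simp

theorem dir2 (M : ℕ) (hM : 0 < M) (V : Set ℕ) (hV : ∀ n ∈ V, n < 2 ^ M)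
    (h0 : 0 ∈ V) (hh : 2 ^ (M - 1) ∈ V)
    (hcl : ∀ m : ℕ, m + 2 ≤ M →
      (∃ i : ℕ, i ≤ 2 ^ m - 1 ∧ i * 2 ^ (M - m) + 2 ^ (M - m - 2) ∈ V) ∧
      (∃ i : ℕ, i ≤ 2 ^ m - 1 ∧ i * 2 ^ (M - m) + 3 * 2 ^ (M - m - 2) ∈ V)) :
    ModuloDFTIdentifiable (2 ^ M) V := by
  classical
  intro s s' hs hs' hG
  have hN : (2 ^ M : ℕ) ≠ 0 := (Nat.pow_pos two_pos).ne'
  -- Gaussian integer decomposition of the measurement difference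
  choose a b hab using hG
  have hImem : Complex.I ∈ KK := by rw [KK]; exact mem_adjoin_simple_self ℚ Complex.I
  set iK : ↥KK := ⟨Complex.I, hImem⟩ with hiK
  set ck : Fin (2 ^ M) → ↥KK := fun k => (a k : ↥KK) + (b k : ↥KK) * iK with hckdef
  have hck : ∀ k : Fin (2 ^ M), (algebraMap ↥KK ℂ) (ck k)
      = (dft (2 ^ M)).mulVec s k - (dft (2 ^ M)).mulVec s' k := by
    intro k
    rw [hab k, hckdef]
    push_cast
    rfl
  set P : Polynomial ↥KK := ∑ k : Fin (2 ^ M), Polynomial.C (ck k) * Polynomial.X ^ (k : ℕ) with hPdef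
  have hPev : ∀ z : ℂ, Polynomial.aeval z P
      = ∑ k : Fin (2 ^ M), ((dft (2 ^ M)).mulVec s k - (dft (2 ^ M)).mulVec s' k) * z ^ (k : ℕ) := by
    intro z
    rw [hPdef, map_sum]
    refine Finset.sum_congr rfl fun k _ => ?_
    rw [map_mul, Polynomial.aeval_C, map_pow, Polynomial.aeval_X, hck k]
  -- the key formula : s n - s' n = (1/√(2 ^ M)) * P(ζ^n)
  have hx : ∀ n : Fin (2 ^ M), s n - s' n
      = (1 / Real.sqrt (2 ^ M : ℕ) : ℂ) * Polynomial.aeval ((zet (2 ^ M)) ^ (n : ℕ)) P := by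
    intro n
    have hxv := congrFun (mulVec_synth hN (s - s')) n
    have hmv : (dft (2 ^ M)).mulVec (s - s') = fun m => (dft (2 ^ M)).mulVec s m - (dft (2 ^ M)).mulVec s' m := by
      rw [Matrix.mulVec_sub]; rfl
    rw [hmv] at hxv
    have : synth (2 ^ M) (fun m => (dft (2 ^ M)).mulVec s m - (dft (2 ^ M)).mulVec s' m) n
        = (1 / Real.sqrt (2 ^ M : ℕ) : ℂ) * Polynomial.aeval ((zet (2 ^ M)) ^ (n : ℕ)) P := by
      rw [hPev]
      show (1 / Real.sqrt (2 ^ M : ℕ) : ℂ) * ∑ m : Fin (2 ^ M),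
          ((dft (2 ^ M)).mulVec s m - (dft (2 ^ M)).mulVec s' m) * (zet (2 ^ M)) ^ ((n : ℕ) * (m : ℕ)) = _
      congr 1
      exact Finset.sum_congr rfl fun m _ => by rw [pow_mul]
    rw [← this, hxv]
    rfl
  have hsqrtne : (1 / Real.sqrt (2 ^ M : ℕ) : ℂ) ≠ 0 := by
    simp only [ne_eq, one_div, inv_eq_zero, Complex.ofReal_eq_zero]
    exact (Real.sqrt_pos.mpr (by positivity : (0:ℝ) < ((2 ^ M : ℕ) : ℝ))).ne'
  have hroot : ∀ n : Fin (2 ^ M), (n : ℕ) ∈ V → Polynomial.aeval ((zet (2 ^ M)) ^ (n : ℕ)) P = 0 := by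
    intro n hnV
    have h1 := hx n
    rw [hs n hnV, hs' n hnV, sub_self] at h1
    exact (mul_eq_zero.mp h1.symm).resolve_left hsqrtne
  -- every power of ζ is a root
  have hallroot : ∀ n : Fin (2 ^ M), Polynomial.aeval ((zet (2 ^ M)) ^ (n : ℕ)) P = 0 := by
    intro n
    by_cases hn0 : (n : ℕ) = 0
    · exact hroot n (by rw [hn0]; exact h0)
    by_cases hnh : (n : ℕ) = 2 ^ (M - 1)
    · exact hroot n (by rw [hnh]; exact hh)
    obtain ⟨m, j, h1, h2, h3, h4⟩ := classify M hM (n : ℕ) n.isLt hn0 hnh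
    have hM2 : 2 ≤ M := by omega
    set c : ℕ := j % 4 with hc
    have hc14 : c = 1 ∨ c = 3 := by omega
    have e4 : (2:ℕ) ^ (M - m) = 4 * 2 ^ (M - m - 2) := by
      conv_lhs => rw [show M - m = 2 + (M - m - 2) by omega]
      rw [pow_add]; norm_num
    have e5 : (2:ℕ) ^ (m + 2) = 4 * 2 ^ m := by
      rw [pow_add]; ring
    -- pick a witness in V from the class (m, c)
    obtain ⟨i, hi, hiV⟩ : ∃ i : ℕ, i ≤ 2 ^ m - 1 ∧ i * 2 ^ (M - m) + c * 2 ^ (M - m - 2) ∈ V := by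
      rcases hc14 with hc1 | hc3
      · obtain ⟨i, hi, hiV⟩ := (hcl m h1).1
        exact ⟨i, hi, by rw [hc1, one_mul]; exact hiV⟩
      · obtain ⟨i, hi, hiV⟩ := (hcl m h1).2
        exact ⟨i, hi, by rw [hc3]; exact hiV⟩
    set n' : ℕ := i * 2 ^ (M - m) + c * 2 ^ (M - m - 2) with hn'
    have hn'lt : n' < (2 ^ M) := hV n' hiV
    set j' : ℕ := 4 * i + c with hj'
    have hn'j : n' = j' * 2 ^ (M - m - 2) := by rw [hn', hj', e4]; ring
    have hj'2 : j' % 2 = 1 := by omega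
    have hj'lt : j' < 2 ^ (m + 2) := by
      have hpos : (0:ℕ) < 2 ^ m := Nat.pow_pos two_pos
      omega
    -- conjugation
    have hprim1 : IsPrimitiveRoot ((zet (2 ^ M)) ^ n') (2 ^ (m + 2)) := by
      rw [hn'j]; exact prim_pow h1 hj'2
    have hprim2 : IsPrimitiveRoot ((zet (2 ^ M)) ^ (n : ℕ)) (2 ^ (m + 2)) := by
      rw [h4]; exact prim_pow h1 h2
    have heq : ((zet (2 ^ M)) ^ n') ^ (2 ^ m) = ((zet (2 ^ M)) ^ (n : ℕ)) ^ (2 ^ m) := by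
      rw [← pow_mul, ← pow_mul, zet_pow_eq_iff hN]
      have e6 : ∀ jj : ℕ, (jj * 2 ^ (M - m - 2)) * 2 ^ m = jj * 2 ^ (M - 2) := by
        intro jj
        rw [mul_assoc, ← pow_add]
        congr 2
        omega
      rw [hn'j, h4, e6, e6]
      have hjj : j' ≡ j [MOD 4] := by
        have : j' % 4 = c := by omega
        unfold Nat.ModEq
        omega
      have hmul := Nat.ModEq.mul_right' (c := 2 ^ (M - 2)) hjj
      have e7 : (4:ℕ) * 2 ^ (M - 2) = 2 ^ M := by
        conv_rhs => rw [show M = 2 + (M - 2) by omega]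
        rw [pow_add]; norm_num
      rwa [e7] at hmul
    refine conj_root hprim1 hprim2 heq P (hroot ⟨n', hn'lt⟩ hiV)
  -- conclude
  funext n
  have h1 := hx n
  rw [hallroot n, mul_zero] at h1
  exact sub_eq_zero.mp h1

lemma counterexample (M : ℕ) (hM : 0 < M) (V : Set ℕ)
    (g : Polynomial GaussianInt) (hmonic : g.Monic) (hdeg1 : 1 ≤ g.natDegree)
    (hdvd : g ∣ Polynomial.X ^ (2 ^ M) - 1)
    (hroots : ∀ n : Fin (2 ^ M), (n : ℕ) ∈ V →
      (g.map GaussianInt.toComplex).eval ((zet (2 ^ M)) ^ (n : ℕ)) ≠ 0) :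
    ¬ ModuloDFTIdentifiable (2 ^ M) V := by
  classical
  intro hid
  have hN : (2 ^ M : ℕ) ≠ 0 := (Nat.pow_pos two_pos).ne'
  obtain ⟨p', hp'⟩ := hdvd
  have hXNmonic : (Polynomial.X ^ (2 ^ M) - 1 : Polynomial GaussianInt).Monic := by
    rw [show (1 : Polynomial GaussianInt) = Polynomial.C 1 by rw [map_one]]
    exact monic_X_pow_sub_C 1 hN
  have hXNdeg : (Polynomial.X ^ (2 ^ M) - 1 : Polynomial GaussianInt).natDegree = 2 ^ M := by
    rw [show (1 : Polynomial GaussianInt) = Polynomial.C 1 by rw [map_one]]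
    exact natDegree_X_pow_sub_C
  have hgne : g ≠ 0 := hmonic.ne_zero
  have hp'ne : p' ≠ 0 := by
    intro h
    rw [h, mul_zero] at hp'
    exact hXNmonic.ne_zero hp'
  have hdegs : g.natDegree + p'.natDegree = 2 ^ M := by
    rw [← Polynomial.natDegree_mul hgne hp'ne, ← hp', hXNdeg]
  have hp'deg : p'.natDegree < 2 ^ M := by omega
  set p : Polynomial ℂ := p'.map GaussianInt.toComplex with hpdef
  have hpdeg : p.natDegree < 2 ^ M := lt_of_le_of_lt Polynomial.natDegree_map_le hp'deg
  have hpne : p ≠ 0 := by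
    rw [hpdef, Ne, Polynomial.map_eq_zero_iff GaussianInt.toComplex_injective]
    exact hp'ne
  set y : Fin (2 ^ M) → ℂ := fun k => p.coeff (k : ℕ) with hydef
  set s : Fin (2 ^ M) → ℂ := synth (2 ^ M) y with hsdef
  have hFs : (dft (2 ^ M)).mulVec s = y := synth_mulVec hN y
  -- s evaluates class polynomials
  have hseval : ∀ n : Fin (2 ^ M),
      s n = (1 / Real.sqrt (2 ^ M : ℕ) : ℂ) * p.eval ((zet (2 ^ M)) ^ (n : ℕ)) := by
    intro n
    show (1 / Real.sqrt (2 ^ M : ℕ) : ℂ) * ∑ m : Fin (2 ^ M),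
        y m * (zet (2 ^ M)) ^ ((n : ℕ) * (m : ℕ)) = _
    congr 1
    rw [Polynomial.eval_eq_sum_range' hpdeg, Fin.sum_univ_eq_sum_range
      (fun m => p.coeff m * (zet (2 ^ M)) ^ ((n : ℕ) * m))]
    refine Finset.sum_congr rfl fun m _ => ?_
    rw [pow_mul]
  -- s vanishes on V
  have hs0 : ∀ n : Fin (2 ^ M), (n : ℕ) ∈ V → s n = 0 := by
    intro n hnV
    have hev : (g.map GaussianInt.toComplex).eval ((zet (2 ^ M)) ^ (n : ℕ))
        * p.eval ((zet (2 ^ M)) ^ (n : ℕ)) = 0 := by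
      have := congrArg (fun q => Polynomial.eval ((zet (2 ^ M)) ^ (n : ℕ))
        (q.map GaussianInt.toComplex)) hp'
      simp only [Polynomial.map_mul, Polynomial.map_sub, Polynomial.map_pow,
        Polynomial.map_one, Polynomial.map_X, Polynomial.eval_mul, Polynomial.eval_sub,
        Polynomial.eval_pow, Polynomial.eval_X, Polynomial.eval_one] at this
      rw [← this, ← pow_mul, mul_comm ((n:ℕ)) (2 ^ M), pow_mul, (zet_prim hN).pow_eq_one,
        one_pow, sub_self]
    rw [hseval n]
    rcases mul_eq_zero.mp hev with h | h
    · exact absurd h (hroots n hnV)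
    · rw [h, mul_zero]
  have hsne : s ≠ 0 := by
    intro h
    apply hpne
    have hy0 : y = 0 := by rw [← hFs, h, Matrix.mulVec_zero]
    ext k
    rcases lt_or_ge k (2 ^ M) with hk | hk
    · have := congrFun hy0 ⟨k, hk⟩
      simpa using this
    · rw [Polynomial.coeff_eq_zero_of_natDegree_lt (lt_of_lt_of_le hpdeg hk)]
      simp
  apply hsne
  apply hid s 0 hs0 (fun n _ => rfl)
  intro m
  rw [Matrix.mulVec_zero, hFs]
  refine ⟨(p'.coeff (m : ℕ)).re, (p'.coeff (m : ℕ)).im, ?_⟩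
  show p.coeff (m : ℕ) - 0 = _
  rw [sub_zero, hpdef, Polynomial.coeff_map, GaussianInt.toComplex_def]

lemma zet_half {M : ℕ} (hM : 1 ≤ M) : (zet (2 ^ M)) ^ (2 ^ (M - 1)) = -1 := by
  have hN : (2 ^ M : ℕ) ≠ 0 := (Nat.pow_pos two_pos).ne'
  have hsq : ((zet (2 ^ M)) ^ (2 ^ (M - 1))) ^ 2 = 1 := by
    rw [← pow_mul, show 2 ^ (M - 1) * 2 = 2 ^ M by
      rw [← pow_succ]; congr 1; omega, (zet_prim hN).pow_eq_one]
  have hne : (zet (2 ^ M)) ^ (2 ^ (M - 1)) ≠ 1 :=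
    (zet_prim hN).pow_ne_one_of_pos_of_lt (Nat.pow_pos two_pos).ne'
      (Nat.pow_lt_pow_right one_lt_two (by omega))
  have : ((zet (2 ^ M)) ^ (2 ^ (M - 1)) - 1) * ((zet (2 ^ M)) ^ (2 ^ (M - 1)) + 1) = 0 := by
    ring_nf; linear_combination hsq
  rcases mul_eq_zero.mp this with hc | hc
  · exact absurd (by linear_combination hc) hne
  · linear_combination hc

lemma case3 (M m₀ c₀ : ℕ) (hM : 0 < M) (V : Set ℕ) (hV : ∀ n ∈ V, n < 2 ^ M)
    (hm₀ : m₀ + 2 ≤ M) (hc : c₀ = 1 ∨ c₀ = 3)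
    (hmiss : ∀ i : ℕ, i ≤ 2 ^ m₀ - 1 → i * 2 ^ (M - m₀) + c₀ * 2 ^ (M - m₀ - 2) ∉ V) :
    ¬ ModuloDFTIdentifiable (2 ^ M) V := by
  have hN : (2 ^ M : ℕ) ≠ 0 := (Nat.pow_pos two_pos).ne'
  set ii : GaussianInt := ⟨0, 1⟩ with hiidef
  have hii2 : ii * ii = -1 := by
    ext <;> simp [hiidef, Zsqrtd.re_mul, Zsqrtd.im_mul]
  have hii4 : ii ^ 4 = 1 := by
    have : ii ^ 4 = (ii * ii) * (ii * ii) := by ring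
    rw [this, hii2]
    ring
  have hiiI : GaussianInt.toComplex ii = Complex.I := by
    rw [GaussianInt.toComplex_def]
    simp [hiidef]
  apply counterexample M hM V (Polynomial.X ^ (2 ^ m₀) - Polynomial.C (ii ^ c₀))
  · exact monic_X_pow_sub_C _ (Nat.pow_pos two_pos).ne'
  · rw [natDegree_X_pow_sub_C]
    exact Nat.one_le_two_pow
  · have hd := sub_dvd_pow_sub_pow (Polynomial.X ^ (2 ^ m₀) : Polynomial GaussianInt)
      (Polynomial.C (ii ^ c₀)) (2 ^ (M - m₀))
    have e1 : ((Polynomial.X : Polynomial GaussianInt) ^ (2 ^ m₀)) ^ (2 ^ (M - m₀))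
        = Polynomial.X ^ (2 ^ M) := by
      rw [← pow_mul, ← pow_add]; congr 2; omega
    have e2 : ((Polynomial.C (ii ^ c₀)) ^ (2 ^ (M - m₀)) : Polynomial GaussianInt) = 1 := by
      rw [← map_pow, ← pow_mul]
      have : c₀ * 2 ^ (M - m₀) = 4 * (c₀ * 2 ^ (M - m₀ - 2)) := by
        have : (2:ℕ) ^ (M - m₀) = 4 * 2 ^ (M - m₀ - 2) := by
          conv_lhs => rw [show M - m₀ = 2 + (M - m₀ - 2) by omega]
          rw [pow_add]; norm_num
        rw [this]; ring
      rw [this, mul_comm 4, pow_mul', hii4, one_pow, map_one]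
    rwa [e1, e2] at hd
  · intro n hnV hev
    rw [Polynomial.map_sub, Polynomial.map_pow, Polynomial.map_X, Polynomial.map_C,
      map_pow, hiiI, Polynomial.eval_sub, Polynomial.eval_pow, Polynomial.eval_X,
      Polynomial.eval_C, sub_eq_zero, ← pow_mul, ← zet_quarter (show 2 ≤ M by omega),
      ← pow_mul, mul_comm (2 ^ (M - 2)) c₀, zet_pow_eq_iff hN] at hev
    obtain ⟨i, hi, hn⟩ := declass M m₀ c₀ (n : ℕ) hm₀ hc n.isLt hev
    exact hmiss i hi (hn ▸ hnV)

theorem dir1 (M : ℕ) (hM : 0 < M) (V : Set ℕ) (hV : ∀ n ∈ V, n < 2 ^ M)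
    (hid : ModuloDFTIdentifiable (2 ^ M) V) :
    0 ∈ V ∧ 2 ^ (M - 1) ∈ V ∧
      ∀ m : ℕ, m + 2 ≤ M →
        (∃ i : ℕ, i ≤ 2 ^ m - 1 ∧ i * 2 ^ (M - m) + 2 ^ (M - m - 2) ∈ V) ∧
        (∃ i : ℕ, i ≤ 2 ^ m - 1 ∧ i * 2 ^ (M - m) + 3 * 2 ^ (M - m - 2) ∈ V) := by
  have hN : (2 ^ M : ℕ) ≠ 0 := (Nat.pow_pos two_pos).ne'
  refine ⟨?_, ?_, ?_⟩
  · by_contra h0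
    refine counterexample M hM V (Polynomial.X - 1) ?_ ?_ ?_ ?_ hid
    · rw [show (1 : Polynomial GaussianInt) = Polynomial.C 1 by rw [map_one]]
      exact monic_X_sub_C 1
    · rw [show (1 : Polynomial GaussianInt) = Polynomial.C 1 by rw [map_one],
        natDegree_X_sub_C]
    · have := sub_dvd_pow_sub_pow (Polynomial.X : Polynomial GaussianInt) 1 (2 ^ M)
      rwa [one_pow] at this
    · intro n hnV hev
      rw [Polynomial.map_sub, Polynomial.map_X, Polynomial.map_one, Polynomial.eval_sub,
        Polynomial.eval_X, Polynomial.eval_one, sub_eq_zero,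
        show (1:ℂ) = (zet (2 ^ M)) ^ (0:ℕ) by rw [pow_zero], zet_pow_eq_iff hN] at hev
      have : (n : ℕ) = 0 := by
        have h1 : (n:ℕ) % 2 ^ M = 0 % 2 ^ M := hev
        rw [Nat.mod_eq_of_lt n.isLt, Nat.mod_eq_of_lt (Nat.pow_pos (n := M) two_pos)] at h1
        exact h1
      exact h0 (this ▸ hnV)
  · by_contra hh
    refine counterexample M hM V (Polynomial.X + 1) ?_ ?_ ?_ ?_ hid
    · rw [show (Polynomial.X + 1 : Polynomial GaussianInt) = Polynomial.X - Polynomial.C (-1) by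
        rw [map_neg, map_one, sub_neg_eq_add]]
      exact monic_X_sub_C (-1)
    · rw [show (Polynomial.X + 1 : Polynomial GaussianInt) = Polynomial.X - Polynomial.C (-1) by
        rw [map_neg, map_one, sub_neg_eq_add], natDegree_X_sub_C]
    · have := sub_dvd_pow_sub_pow (Polynomial.X : Polynomial GaussianInt) (-1) (2 ^ M)
      rwa [show ((-1 : Polynomial GaussianInt)) ^ (2 ^ M) = 1 from
        Even.neg_one_pow ⟨2 ^ (M - 1), by rw [← two_mul, ← pow_succ']; congr 1; omega⟩,
        sub_neg_eq_add] at this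
    · intro n hnV hev
      rw [Polynomial.map_add, Polynomial.map_X, Polynomial.map_one, Polynomial.eval_add,
        Polynomial.eval_X, Polynomial.eval_one, ← sub_neg_eq_add, sub_eq_zero,
        ← zet_half (show 1 ≤ M by omega), zet_pow_eq_iff hN] at hev
      have : (n : ℕ) = 2 ^ (M - 1) := by
        have h1 : (n:ℕ) % 2 ^ M = 2 ^ (M-1) % 2 ^ M := hev
        rw [Nat.mod_eq_of_lt n.isLt, Nat.mod_eq_of_lt
          (Nat.pow_lt_pow_right one_lt_two (by omega))] at h1
        exact h1
      exact hh (this ▸ hnV)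
  · intro m₀ hm₀
    constructor
    · by_contra hA
      push_neg at hA
      refine case3 M m₀ 1 hM V hV hm₀ (Or.inl rfl) (fun i hi => ?_) hid
      rw [one_mul]
      exact hA i hi
    · by_contra hA
      push_neg at hA
      exact case3 M m₀ 3 hM V hV hm₀ (Or.inr rfl) hA hid


/-- for N = 2^M, the modulo-DFT sensing model is identifiable on ℂ^N_𝒱 iff
0 ∈ 𝒱, 2^{M−1} ∈ 𝒱, and for every m with m + 2 ≤ M (i.e. 0 ≤ m ≤ M−2) the set 𝒱 meets both
{i·2^{M−m} + 2^{M−m−2} : 0 ≤ i ≤ 2^m−1} and {i·2^{M−m} + 3·2^{M−m−2} : 0 ≤ i ≤ 2^m−1}. -/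
theorem stmt3 (M : ℕ) (hM : 0 < M) (V : Set ℕ) (hV : ∀ n ∈ V, n < 2 ^ M) :
    ModuloDFTIdentifiable (2 ^ M) V ↔
      (0 ∈ V ∧ 2 ^ (M - 1) ∈ V ∧
        ∀ m : ℕ, m + 2 ≤ M →
          (∃ i : ℕ, i ≤ 2 ^ m - 1 ∧ i * 2 ^ (M - m) + 2 ^ (M - m - 2) ∈ V) ∧
          (∃ i : ℕ, i ≤ 2 ^ m - 1 ∧ i * 2 ^ (M - m) + 3 * 2 ^ (M - m - 2) ∈ V)) := by
  constructor
  · intro hid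
    exact dir1 M hM V hV hid
  · rintro ⟨h0, hh, hcl⟩
    exact dir2 M hM V hV h0 hh hcl
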